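/- Let (X, f_{1,∞}) be a nonautonomous discrete dynamical system such that the sequence (f_n)_{n∈ℕ} converges uniformly to a function φ : X → X. Then φ ∘ f_1^p = f_1^{p+1} for every free ultrafilter p on ℕ, where p + 1 denotes the pushforward of p under m ↦ m + 1. -/

import Mathlib

open Filter Topology

/-- The `n`-th iterate `f_1^n = f_n ∘ ⋯ ∘ f_1` (maps indexed from `1`; `f 0` unused). -/
def iterSeq {X : Type*} (f : ℕ → X → X) : ℕ → X → X
  | 0 => id
  | n + 1 => f (n + 1) ∘ iterSeq f n

/-- The `p`-limit of a sequence `u` with respect to an ultrafilter `p` on `ℕ`. -/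
noncomputable def pLim {X : Type*} [TopologicalSpace X] (p : Ultrafilter ℕ) (u : ℕ → X) : X :=
  letI : Nonempty X := ⟨u 0⟩
  limUnder (p : Filter ℕ) u

/-- `f_1^p(x) = p-lim_n f_1^n(x)`. -/
noncomputable def pIter {X : Type*} [TopologicalSpace X] (f : ℕ → X → X)
    (p : Ultrafilter ℕ) : X → X :=
  fun x => pLim p fun n => iterSeq f n x


lemma pLim_tendsto {X : Type*} [TopologicalSpace X] [CompactSpace X] [T2Space X]
    (p : Ultrafilter ℕ) (u : ℕ → X) :
    Tendsto u (p : Filter ℕ) (𝓝 (pLim p u)) := by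
  obtain ⟨x, -, hx⟩ := isCompact_univ.ultrafilter_le_nhds (p.map u) (by simp)
  have ht : Tendsto u (p : Filter ℕ) (𝓝 x) := hx
  have : pLim p u = x := ht.limUnder_eq
  rw [this]; exact ht

/-- If `(f_n)` converges uniformly to `φ : X → X`, then `φ ∘ f_1^p = f_1^{p+1}` for every
free ultrafilter `p` on `ℕ`, where `p + 1` is the pushforward of `p` under `m ↦ m + 1`. -/
theorem stmt10 {X : Type*} [MetricSpace X] [CompactSpace X]
    (f : ℕ → X → X) (hf : ∀ n, 1 ≤ n → Continuous (f n))
    (φ : X → X) (hconv : TendstoUniformly (fun n x => f n x) φ Filter.atTop)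
    (p : Ultrafilter ℕ) (hp : (p : Filter ℕ) ≤ Filter.cofinite) :
    φ ∘ pIter f p = pIter f (p.map (· + 1)) := by
  funext x
  set u : ℕ → X := fun n => iterSeq f n x with hu
  have hφc : Continuous φ :=
    hconv.continuous (eventually_atTop.2 ⟨1, fun n hn => hf n hn⟩).frequently
  have hy : Tendsto u (p : Filter ℕ) (𝓝 (pLim p u)) := pLim_tendsto p u
  set y := pLim p u with hydef
  have hpa : (p : Filter ℕ) ≤ atTop := by rwa [← Nat.cofinite_eq_atTop]
  have h1 : Tendsto (fun n => φ (u n)) (p : Filter ℕ) (𝓝 (φ y)) :=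
    (hφc.tendsto y).comp hy
  have hA' : Tendsto (fun n => dist (f (n+1) (u n)) (φ (u n))) atTop (𝓝 0) := by
    rw [Metric.tendsto_nhds]
    intro ε hε
    rw [Metric.tendstoUniformly_iff] at hconv
    filter_upwards [(tendsto_add_atTop_nat 1).eventually (hconv ε hε)] with n hn
    have h := hn (u n)
    rw [dist_comm] at h
    simpa [Real.dist_eq, abs_of_nonneg dist_nonneg] using h
  have hA : Tendsto (fun n => dist (f (n+1) (u n)) (φ (u n))) (p : Filter ℕ) (𝓝 0) :=
    hA'.mono_left hpa
  have hB : Tendsto (fun n => dist (φ (u n)) (φ y)) (p : Filter ℕ) (𝓝 0) :=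
    tendsto_iff_dist_tendsto_zero.1 h1
  have h3 : Tendsto (fun n => f (n+1) (u n)) (p : Filter ℕ) (𝓝 (φ y)) := by
    rw [tendsto_iff_dist_tendsto_zero]
    refine squeeze_zero (fun n => dist_nonneg) (fun n => dist_triangle _ (φ (u n)) _) ?_
    simpa using hA.add hB
  have hshift : Tendsto u ((p.map (· + 1) : Ultrafilter ℕ) : Filter ℕ) (𝓝 (φ y)) := by
    rw [Ultrafilter.coe_map, tendsto_map'_iff]
    have : (u ∘ (· + 1)) = fun n => f (n+1) (u n) := by
      funext n; simp [hu, iterSeq]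
    rw [this]; exact h3
  have hrhs : pIter f (p.map (· + 1)) x = φ y := by
    have : pLim (p.map (· + 1)) u = φ y := hshift.limUnder_eq
    simpa [pIter, hu] using this
  simp only [Function.comp_apply]
  rw [hrhs]
  rfl
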